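/- For every positive integer N and every t ∈ [1/(N+2), 1/(N+1)], the N-th iterate of g₂ satisfies g₂^[N](t) = ((N+3)·t − 1) / ((N+4)·t − 1). -/
import Mathlib


/-- The element `g₂` of the Lodha–Moore group as a piecewise fractional linear map. -/
noncomputable def g₂ (t : ℝ) : ℝ :=
  if t ≤ 0 then t
  else if t ≤ 1 / 3 then t / (1 - t)
  else if t ≤ 1 / 2 then (4 * t - 1) / (5 * t - 1)
  else if t ≤ 1 then 1 / (2 - t)
  else t

/-- Formula for the `N`-th iterate of `g₂` on `[1/(N+2), 1/(N+1)]`. -/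
theorem g₂_iterate_formula₂ (N : ℕ) (hN : 0 < N) (t : ℝ)
    (ht : t ∈ Set.Icc (1 / ((N : ℝ) + 2)) (1 / ((N : ℝ) + 1))) :
    g₂^[N] t = (((N : ℝ) + 3) * t - 1) / (((N : ℝ) + 4) * t - 1) := by
  induction N, hN using Nat.le_induction generalizing t with
  | base =>
    obtain ⟨h1, h2⟩ := ht
    norm_num at h1 h2 ⊢
    have ht0 : (0:ℝ) < t := by linarith
    simp only [Function.iterate_one, g₂, if_neg (not_le.mpr ht0)]
    by_cases h3 : t ≤ 1/3
    · have he : t = 1/3 := le_antisymm h3 h1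
      rw [if_pos h3, he]; norm_num
    · rw [if_neg h3, if_pos h2]
  | succ n hn ih =>
    obtain ⟨h1, h2⟩ := ht
    push_cast at h1 h2 ⊢
    have hn1 : (1:ℝ) ≤ (n:ℝ) := by exact_mod_cast hn
    have hd3 : (0:ℝ) < (n:ℝ) + 3 := by linarith
    have hd2 : (0:ℝ) < (n:ℝ) + 2 := by linarith
    have hA : 1 ≤ t * ((n:ℝ) + 3) := by
      rw [div_le_iff₀ (by linarith : (0:ℝ) < (n:ℝ)+1+2)] at h1; linarith
    have hB : t * ((n:ℝ) + 2) ≤ 1 := by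
      rw [le_div_iff₀ (by linarith : (0:ℝ) < (n:ℝ)+1+1)] at h2; linarith
    have ht0 : (0:ℝ) < t := lt_of_lt_of_le (by positivity) h1
    have ht13 : t ≤ 1/3 := by nlinarith
    have h1t : (0:ℝ) < 1 - t := by nlinarith
    have hg : g₂ t = t / (1 - t) := by
      simp only [g₂, if_neg (not_le.mpr ht0), if_pos ht13]
    rw [Function.iterate_succ_apply, hg, ih]
    · have e1 : ((n:ℝ) + 3) * (t / (1 - t)) - 1 = (((n:ℝ) + 4) * t - 1) / (1 - t) := by
        field_simp; ring
      have e2 : ((n:ℝ) + 4) * (t / (1 - t)) - 1 = (((n:ℝ) + 1 + 4) * t - 1) / (1 - t) := by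
        field_simp; ring
      rw [e1, e2, div_div_div_comm, div_self h1t.ne', div_one]
      ring_nf
    · constructor
      · rw [div_le_div_iff₀ hd2 h1t]; nlinarith
      · rw [div_le_div_iff₀ h1t (by linarith : (0:ℝ) < (n:ℝ)+1)]; nlinarith
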